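/- Let Θ ⊆ ℝⁿ be a closed convex set, Y ∈ ℝⁿ, w ∈ [0,∞)ⁿ a weight vector, and θ̂ a minimizer of θ ↦ Σᵢ wᵢ(Yᵢ − θᵢ)² over Θ. Suppose θ̂ ± η𝟙 ∈ Θ for some η > 0, where 𝟙 = (1,…,1). Suppose further that for some index k and some ε ∈ {−1, 1} and η' > 0, both θ̂ + εη'𝟙^{[1:k]} ∈ Θ and θ̂ + εη'𝟙^{[k:n]} ∈ Θ, where 𝟙^{[a:b]} has ones in coordinates a through b and zeros elsewhere. Define w̲_k := [Σ_{i<k} wᵢ(Yᵢ − θ̂ᵢ)] / (θ̂_k − Y_k) · 1{θ̂_k ≠ Y_k} and w̄_k := [Σ_{i>k} wᵢ(Yᵢ − θ̂ᵢ)] / (θ̂_k − Y_k) · 1{θ̂_k ≠ Y_k}. Then w̲_k, w̄_k ∈ [0, w_k] and w̲_k + w̄_k ≤ w_k, with equality when Y_k ≠ θ̂_k. -/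

import Mathlib

lemma aux_small (a b : ℝ) (h : ∀ t : ℝ, 0 < t → t ≤ 1 → a * t ≤ b * t ^ 2) : a ≤ 0 := by
  by_contra hc
  push_neg at hc
  rcases le_or_gt b 0 with hb | hb
  · have := h 1 one_pos le_rfl
    nlinarith
  · set t := min 1 (a / (2 * b)) with ht
    have ht0 : 0 < t := lt_min one_pos (by positivity)
    have ht1 : t ≤ 1 := min_le_left _ _
    have h2 : t ≤ a / (2 * b) := min_le_right _ _
    have := h t ht0 ht1
    have hbt : b * t ≤ a / 2 := by
      calc b * t ≤ b * (a / (2 * b)) := by nlinarith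
        _ = a / 2 := by field_simp
    nlinarith

lemma var_ineq (n : ℕ) (Θ : Set (EuclideanSpace ℝ (Fin n))) (hconv : Convex ℝ Θ)
    (Y : EuclideanSpace ℝ (Fin n)) (w : Fin n → ℝ)
    (θh : EuclideanSpace ℝ (Fin n)) (hθΘ : θh ∈ Θ)
    (hmin : ∀ θ ∈ Θ, ∑ i, w i * (Y i - θh i) ^ 2 ≤ ∑ i, w i * (Y i - θ i) ^ 2)
    (p : EuclideanSpace ℝ (Fin n)) (hp : p ∈ Θ) :
    ∑ i, w i * (Y i - θh i) * (p i - θh i) ≤ 0 := by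
  have key : ∀ t : ℝ, 0 < t → t ≤ 1 →
      (2 * ∑ i, w i * (Y i - θh i) * (p i - θh i)) * t
        ≤ (∑ i, w i * (p i - θh i) ^ 2) * t ^ 2 := by
    intro t ht0 ht1
    have hmem : (1 - t) • θh + t • p ∈ Θ :=
      hconv hθΘ hp (by linarith) ht0.le (by ring)
    have h := hmin _ hmem
    have hco : ∀ i, ((1 - t) • θh + t • p) i = θh i + t * (p i - θh i) := by
      intro i
      simp [PiLp.add_apply, PiLp.smul_apply, smul_eq_mul]
      ring
    have hexp : ∑ i, w i * (Y i - ((1 - t) • θh + t • p) i) ^ 2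
        = ∑ i, w i * (Y i - θh i) ^ 2
          - (2 * ∑ i, w i * (Y i - θh i) * (p i - θh i)) * t
          + (∑ i, w i * (p i - θh i) ^ 2) * t ^ 2 := by
      rw [Finset.mul_sum, Finset.sum_mul, Finset.sum_mul, ← Finset.sum_sub_distrib,
        ← Finset.sum_add_distrib]
      refine Finset.sum_congr rfl fun i _ => ?_
      rw [hco i]; ring
    rw [hexp] at h
    linarith
  have := aux_small _ _ key
  linarith

/-- Boundary weight lemma (Lemma S1(a) of the paper): the boundary-adjusted
weights at a splitting index `k` lie in `[0, w k]` and sum to at most `w k`,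
with equality when `Y k ≠ θ̂ k`. -/
theorem stmt4 (n : ℕ) (Θ : Set (EuclideanSpace ℝ (Fin n)))
    (hclosed : IsClosed Θ) (hconv : Convex ℝ Θ)
    (Y : EuclideanSpace ℝ (Fin n)) (w : Fin n → ℝ) (hw : ∀ i, 0 ≤ w i)
    (θh : EuclideanSpace ℝ (Fin n)) (hθΘ : θh ∈ Θ)
    (hmin : ∀ θ ∈ Θ, ∑ i, w i * (Y i - θh i) ^ 2 ≤ ∑ i, w i * (Y i - θ i) ^ 2)
    (η : ℝ) (hη : 0 < η)
    (hplus : (show EuclideanSpace ℝ (Fin n) from WithLp.toLp 2 (fun i => θh i + η)) ∈ Θ)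
    (hminus : (show EuclideanSpace ℝ (Fin n) from WithLp.toLp 2 (fun i => θh i - η)) ∈ Θ)
    (k : Fin n) (ε : ℝ) (hε : ε = 1 ∨ ε = -1) (η' : ℝ) (hη' : 0 < η')
    (h1 : (show EuclideanSpace ℝ (Fin n) from
      WithLp.toLp 2 (fun i => θh i + if i ≤ k then ε * η' else 0)) ∈ Θ)
    (h2 : (show EuclideanSpace ℝ (Fin n) from
      WithLp.toLp 2 (fun i => θh i + if k ≤ i then ε * η' else 0)) ∈ Θ) :
    let wlow : ℝ := if θh k = Y k then 0 else
      (∑ i ∈ Finset.univ.filter (· < k), w i * (Y i - θh i)) / (θh k - Y k)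
    let whigh : ℝ := if θh k = Y k then 0 else
      (∑ i ∈ Finset.univ.filter (k < ·), w i * (Y i - θh i)) / (θh k - Y k)
    0 ≤ wlow ∧ wlow ≤ w k ∧ 0 ≤ whigh ∧ whigh ≤ w k ∧ wlow + whigh ≤ w k ∧
      (Y k ≠ θh k → wlow + whigh = w k) := by
  intro wlow whigh
  set r : Fin n → ℝ := fun i => w i * (Y i - θh i) with hr
  have hεne : ε ≠ 0 := by rcases hε with rfl | rfl <;> norm_num
  -- total sum is zero
  have hT : ∑ i, r i = 0 := by
    have hp := var_ineq n Θ hconv Y w θh hθΘ hmin _ hplus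
    have hm := var_ineq n Θ hconv Y w θh hθΘ hmin _ hminus
    have e1 : ∑ i, w i * (Y i - θh i) *
        ((show EuclideanSpace ℝ (Fin n) from WithLp.toLp 2 (fun i => θh i + η)) i - θh i)
        = η * ∑ i, r i := by
      rw [Finset.mul_sum]
      refine Finset.sum_congr rfl fun i _ => ?_
      show w i * (Y i - θh i) * (θh i + η - θh i) = _
      simp [hr]; ring
    have e2 : ∑ i, w i * (Y i - θh i) *
        ((show EuclideanSpace ℝ (Fin n) from WithLp.toLp 2 (fun i => θh i - η)) i - θh i)
        = (-η) * ∑ i, r i := by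
      rw [Finset.mul_sum]
      refine Finset.sum_congr rfl fun i _ => ?_
      show w i * (Y i - θh i) * (θh i - η - θh i) = _
      simp [hr]; ring
    rw [e1] at hp; rw [e2] at hm
    nlinarith
  -- partial-sum inequalities
  have hlek : ε * ∑ i ∈ Finset.univ.filter (· ≤ k), r i ≤ 0 := by
    have hp := var_ineq n Θ hconv Y w θh hθΘ hmin _ h1
    have e1 : ∑ i, w i * (Y i - θh i) *
        ((show EuclideanSpace ℝ (Fin n) from
          WithLp.toLp 2 (fun i => θh i + if i ≤ k then ε * η' else 0)) i - θh i)
        = η' * (ε * ∑ i ∈ Finset.univ.filter (· ≤ k), r i) := by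
      rw [Finset.sum_filter, Finset.mul_sum, Finset.mul_sum]
      refine Finset.sum_congr rfl fun i _ => ?_
      show w i * (Y i - θh i) * ((θh i + if i ≤ k then ε * η' else 0) - θh i) = _
      split_ifs <;> simp [hr] <;> ring
    rw [e1] at hp
    nlinarith
  have hgek : ε * ∑ i ∈ Finset.univ.filter (k ≤ ·), r i ≤ 0 := by
    have hp := var_ineq n Θ hconv Y w θh hθΘ hmin _ h2
    have e1 : ∑ i, w i * (Y i - θh i) *
        ((show EuclideanSpace ℝ (Fin n) from
          WithLp.toLp 2 (fun i => θh i + if k ≤ i then ε * η' else 0)) i - θh i)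
        = η' * (ε * ∑ i ∈ Finset.univ.filter (k ≤ ·), r i) := by
      rw [Finset.sum_filter, Finset.mul_sum, Finset.mul_sum]
      refine Finset.sum_congr rfl fun i _ => ?_
      show w i * (Y i - θh i) * ((θh i + if k ≤ i then ε * η' else 0) - θh i) = _
      split_ifs <;> simp [hr] <;> ring
    rw [e1] at hp
    nlinarith
  set A : ℝ := ∑ i ∈ Finset.univ.filter (· < k), r i with hAdef
  set C : ℝ := ∑ i ∈ Finset.univ.filter (k < ·), r i with hCdef
  have hs1 : ∑ i ∈ Finset.univ.filter (· ≤ k), r i = r k + A := by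
    have : Finset.univ.filter (· ≤ k) = insert k (Finset.univ.filter (· < k)) := by
      ext i; simp [le_iff_lt_or_eq, or_comm]
    rw [this, Finset.sum_insert (by simp)]
  have hs2 : ∑ i ∈ Finset.univ.filter (k ≤ ·), r i = r k + C := by
    have : Finset.univ.filter (k ≤ ·) = insert k (Finset.univ.filter (k < ·)) := by
      ext i; rw [Finset.mem_insert]; simp [le_iff_lt_or_eq, eq_comm, or_comm]
    rw [this, Finset.sum_insert (by simp)]
  have hTsplit : A + r k + C = 0 := by
    have h := Finset.sum_filter_add_sum_filter_not Finset.univ (· < k) r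
    have hnot : Finset.univ.filter (fun i => ¬ i < k) = Finset.univ.filter (k ≤ ·) := by
      ext i; simp [not_lt]
    rw [hnot, hs2, hT] at h
    linarith [h]
  rw [hs1] at hlek; rw [hs2] at hgek
  -- sign facts
  have hεA : 0 ≤ ε * A := by
    have h : ε * A = -(ε * (r k + C)) := by linear_combination ε * hTsplit
    linarith [hgek]
  have hεC : 0 ≤ ε * C := by
    have h : ε * C = -(ε * (r k + A)) := by linear_combination ε * hTsplit
    linarith [hlek]
  have hεrk : ε * r k ≤ 0 := by
    have h : ε * r k = ε * (r k + A) - ε * A := by ring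
    linarith [hlek, hεA]
  by_cases hky : θh k = Y k
  · have hl : wlow = 0 := if_pos hky
    have hh : whigh = 0 := if_pos hky
    refine ⟨by rw [hl], by rw [hl]; exact hw k, by rw [hh], by rw [hh]; exact hw k,
      by rw [hl, hh]; simpa using hw k, fun hne => absurd hky.symm hne⟩
  · have hd : θh k - Y k ≠ 0 := sub_ne_zero.mpr hky
    have hl : wlow = A / (θh k - Y k) := if_neg hky
    have hh : whigh = C / (θh k - Y k) := if_neg hky
    have hrkval : r k = w k * (Y k - θh k) := rfl
    have hAC : A + C = w k * (θh k - Y k) := by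
      linear_combination hTsplit - hrkval
    have hsum : wlow + whigh = w k := by
      rw [hl, hh, ← add_div, hAC, mul_div_assoc, div_self hd, mul_one]
    rcases (hw k).lt_or_eq with hwk | hwk
    · -- w k > 0 : sign of d matches ε
      have hεd : 0 < ε * (θh k - Y k) := by
        have h3 : ε * (Y k - θh k) ≤ 0 := by
          rw [hrkval] at hεrk
          nlinarith [hwk, hεrk]
        have h4 : 0 ≤ ε * (θh k - Y k) := by
          have : ε * (θh k - Y k) = -(ε * (Y k - θh k)) := by ring
          linarith
        exact lt_of_le_of_ne h4 (mul_ne_zero hεne hd).symm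
      have h0A : 0 ≤ wlow := by
        rw [hl]
        have : A / (θh k - Y k) = (ε * A) / (ε * (θh k - Y k)) :=
          (mul_div_mul_left _ _ hεne).symm
        rw [this]
        exact div_nonneg hεA hεd.le
      have h0C : 0 ≤ whigh := by
        rw [hh]
        have : C / (θh k - Y k) = (ε * C) / (ε * (θh k - Y k)) :=
          (mul_div_mul_left _ _ hεne).symm
        rw [this]
        exact div_nonneg hεC hεd.le
      exact ⟨h0A, by linarith, h0C, by linarith, hsum.le, fun _ => hsum⟩
    · -- w k = 0 : A = C = 0
      have hrk : r k = 0 := by rw [hrkval, ← hwk, zero_mul]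
      have hA0 : A = 0 := by
        rcases hε with rfl | rfl <;> simp only [one_mul, neg_one_mul, neg_nonneg] at hεA hεC <;>
          linarith [hTsplit]
      have hC0 : C = 0 := by
        rcases hε with rfl | rfl <;> simp only [one_mul, neg_one_mul, neg_nonneg] at hεA hεC <;>
          linarith [hTsplit]
      have hl0 : wlow = 0 := by rw [hl, hA0, zero_div]
      have hh0 : whigh = 0 := by rw [hh, hC0, zero_div]
      refine ⟨by rw [hl0], by rw [hl0]; exact hw k, by rw [hh0], by rw [hh0]; exact hw k,
        by rw [hl0, hh0]; simpa using hw k, fun _ => hsum⟩
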